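/- Let Q be a d × d real matrix and π ∈ ℝ^d with Q𝟙 = 0, let Π = 𝟙πᵀ denote the d × d matrix whose rows all equal πᵀ, and suppose that exp(tQ) → Π as t → ∞ and that the matrix-valued function t ↦ exp(tQ) − Π is integrable on (0,∞). Define the deviation matrix D = ∫₀^∞ (exp(tQ) − Π) dt (entrywise). Then QD = Π − I, where I is the d × d identity matrix. -/

import Mathlib

open Matrix MeasureTheory Filter

attribute [local instance] Matrix.linftyOpNormedRing Matrix.linftyOpNormedAlgebra

/-- For a generator `Q` with `Q𝟙 = 0`, limiting matrix `Π = 𝟙πᵀ` and deviation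
matrix `D = ∫₀^∞ (exp(tQ) − Π) dt` (entrywise), one has `QD = Π − I`. -/
theorem generator_mul_deviation
    {d : ℕ} (Q : Matrix (Fin d) (Fin d) ℝ) (π : Fin d → ℝ)
    (hQ1 : Q.mulVec (fun _ => (1 : ℝ)) = 0)
    (Pim : Matrix (Fin d) (Fin d) ℝ) (hPim : Pim = Matrix.of fun _ j => π j)
    (hlim : ∀ i j, Tendsto (fun t : ℝ => NormedSpace.exp (t • Q) i j)
      atTop (nhds (Pim i j)))
    (hint : ∀ i j, IntegrableOn
      (fun t : ℝ => NormedSpace.exp (t • Q) i j - Pim i j) (Set.Ioi 0))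
    (D : Matrix (Fin d) (Fin d) ℝ)
    (hD : D = Matrix.of fun i j =>
      ∫ t in Set.Ioi (0 : ℝ), (NormedSpace.exp (t • Q) i j - Pim i j)) :
    Q * D = Pim - 1 := by
  have hrow : ∀ i, ∑ k, Q i k = 0 := by
    intro i
    have := congrFun hQ1 i
    simpa [Matrix.mulVec, dotProduct] using this
  have hQPim : ∀ i j, ∑ k, Q i k * Pim k j = 0 := by
    intro i j
    simp only [hPim, Matrix.of_apply, ← Finset.sum_mul, hrow, zero_mul]
  have hder : ∀ (i j : Fin d) (t : ℝ),
      HasDerivAt (fun u : ℝ => NormedSpace.exp (u • Q) i j)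
        ((Q * NormedSpace.exp (t • Q)) i j) t := by
    intro i j t
    have h := hasDerivAt_exp_smul_const' (𝕂 := ℝ) Q t
    let L : Matrix (Fin d) (Fin d) ℝ →L[ℝ] ℝ :=
      (Matrix.entryLinearMap ℝ ℝ i j).toContinuousLinearMap
    have h2 := (L.hasFDerivAt.comp_hasDerivAt t h)
    exact h2
  -- pointwise identity of integrands
  have hptw : ∀ (i j : Fin d) (t : ℝ),
      ∑ k, Q i k * (NormedSpace.exp (t • Q) k j - Pim k j)
        = (Q * NormedSpace.exp (t • Q)) i j := by
    intro i j t
    simp only [mul_sub, Finset.sum_sub_distrib, hQPim, sub_zero, Matrix.mul_apply]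
  -- the key integral computation
  have key : ∀ i j, (∫ t in Set.Ioi (0:ℝ), (Q * NormedSpace.exp (t • Q)) i j)
      = Pim i j - (1 : Matrix (Fin d) (Fin d) ℝ) i j := by
    intro i j
    have hint' : IntegrableOn (fun t : ℝ => (Q * NormedSpace.exp (t • Q)) i j)
        (Set.Ioi 0) := by
      have : IntegrableOn (fun t : ℝ =>
          ∑ k, Q i k * (NormedSpace.exp (t • Q) k j - Pim k j)) (Set.Ioi 0) :=
        integrable_finset_sum _ fun k _ => ((hint k j).const_mul (Q i k))
      exact this.congr_fun (fun t _ => hptw i j t) measurableSet_Ioi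
    have := integral_Ioi_of_hasDerivAt_of_tendsto'
      (f := fun t : ℝ => NormedSpace.exp (t • Q) i j)
      (fun t _ => hder i j t) hint' (hlim i j)
    rw [this]
    congr 1
    simp [NormedSpace.exp_zero]
  ext i j
  rw [Matrix.mul_apply, hD]
  simp only [Matrix.of_apply]
  have : ∑ k, Q i k * ∫ t in Set.Ioi (0:ℝ),
      (NormedSpace.exp (t • Q) k j - Pim k j)
      = ∫ t in Set.Ioi (0:ℝ), ∑ k, Q i k * (NormedSpace.exp (t • Q) k j - Pim k j) := by
    rw [integral_finset_sum _ fun k _ => ((hint k j).const_mul (Q i k))]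
    exact Finset.sum_congr rfl fun k _ => (integral_const_mul _ _).symm
  rw [this]
  rw [integral_congr_ae (Eventually.of_forall fun t => hptw i j t), key i j]
  simp [Matrix.sub_apply]
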